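/- arXiv:0807.4327 — 5 statements merged into one kernel-verified Lean document; each statement's English description precedes it below -/
import Mathlib

section
/- Under (raBaDi-CoS), the Russell set ru := compr (fun x => ¬ mem x x) is not Normal. -/
theorem stmt1 {V : Type*} (mem : V → V → Prop) (Normal : V → Prop)
    (compr : (V → Prop) → V)
    (raBaDi : ∀ (A : V → Prop) (y : V), mem y (compr A) ↔ (A y ∨ ¬ Normal (compr A))) :
    ¬ Normal (compr (fun x => ¬ mem x x)) := by
  intro h
  have := raBaDi (fun x => ¬ mem x x) (compr (fun x => ¬ mem x x))
  tauto
end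

section
/- Under (raBaDi-CoS) together with the unrestricted extensionality axiom (EE), any two abnormal sets are equal; in particular the Russell set equals the universal set. -/
theorem stmt2 {V : Type*} (mem : V → V → Prop) (Normal : V → Prop)
    (compr : (V → Prop) → V)
    (raBaDi : ∀ (A : V → Prop) (y : V), mem y (compr A) ↔ (A y ∨ ¬ Normal (compr A)))
    (EE : ∀ x y : V, (∀ z, mem z x ↔ mem z y) → x = y)
    (A B : V → Prop) (hA : ¬ Normal (compr A)) (hB : ¬ Normal (compr B)) :
    compr A = compr B := by
  apply EE
  intro z
  simp [raBaDi, hA, hB]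
end

section
/- Under (raBaDi-CoS) and extensionality (EE), the universal set us := compr (fun _ => True) is not Normal. -/
theorem stmt3 {V : Type*} (mem : V → V → Prop) (Normal : V → Prop)
    (compr : (V → Prop) → V)
    (raBaDi : ∀ (A : V → Prop) (y : V), mem y (compr A) ↔ (A y ∨ ¬ Normal (compr A)))
    (EE : ∀ x y : V, (∀ z, mem z x ↔ mem z y) → x = y) :
    ¬ Normal (compr (fun _ => True)) := by
  set r := compr (fun y => ¬ mem y y) with hr
  have hnr : ¬ Normal r := by
    intro hN
    have h := raBaDi (fun y => ¬ mem y y) r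
    simp only [hN, not_true, or_false, ← hr] at h
    exact (not_iff_self h.symm)
  have heq : r = compr (fun _ => True) := by
    apply EE
    intro z
    rw [raBaDi, raBaDi]
    simp [show ¬ Normal (compr fun y => ¬ mem y y) from hnr]
  rw [← heq]
  exact hnr
end

section
/- Under (raBaDi-CoS) with extensionality (EE), the eventuality axiom (nNEM) holds for sets of the form compr A: any two abnormal such sets are equipollent (there is a bijection between their element-classes). -/
theorem stmt15 {V : Type*} (mem : V → V → Prop) (Normal : V → Prop)
    (compr : (V → Prop) → V)
    (raBaDi : ∀ (A : V → Prop) (y : V), mem y (compr A) ↔ (A y ∨ ¬ Normal (compr A)))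
    (EE : ∀ x y : V, (∀ z, mem z x ↔ mem z y) → x = y)
    (A B : V → Prop) (hA : ¬ Normal (compr A)) (hB : ¬ Normal (compr B)) :
    Nonempty ({z : V // mem z (compr A)} ≃ {z : V // mem z (compr B)}) := by
  have h : compr A = compr B := EE _ _ fun z => by
    simp [raBaDi, hA, hB]
  rw [h]
  exact ⟨Equiv.refl _⟩
end

section
/- Under (noBE-CoS) with the Russell set satisfying ru ∈ ru, removing ru from itself is impossible: the set r' := compr (fun x => ¬ mem x x ∧ x ≠ ru) is extensionally equal to ru or is itself abnormal. -/
theorem stmt18 {V : Type*} (mem : V → V → Prop) (Normal : V → Prop)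
    (compr : (V → Prop) → V)
    (noBE : ∀ A : V → Prop, Normal (compr A) ↔ (∀ y, mem y (compr A) ↔ A y))
    (hru : mem (compr (fun x => ¬ mem x x)) (compr (fun x => ¬ mem x x)))
    (hab : ¬ Normal (compr (fun x => ¬ mem x x))) :
    ¬ Normal (compr (fun x => ¬ mem x x ∧ x ≠ compr (fun x => ¬ mem x x))) ∨
      (∀ y, mem y (compr (fun x => ¬ mem x x ∧ x ≠ compr (fun x => ¬ mem x x))) ↔
        mem y (compr (fun x => ¬ mem x x))) := by
  left
  intro hN
  have h := (noBE _).mp hN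
  set r' := compr (fun x => ¬ mem x x ∧ x ≠ compr (fun x => ¬ mem x x)) with hr'
  by_cases hm : mem r' r'
  · exact ((h r').mp hm).1 hm
  · by_cases he : r' = compr (fun x => ¬ mem x x)
    · exact hab (he ▸ hN)
    · exact hm ((h r').mpr ⟨hm, he⟩)
end
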